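/- (Harmonic projection formula.) Let m ≥ 2 and let P be a complex polynomial in m variables, homogeneous of degree n. Define H := ∑_{j=0}^{⌊n/2⌋} c_j · r^{2j} · Δ^j P, where c_0 = 1 and c_j = (-1)^j / (2^j · j! · ∏_{t=0}^{j-1}(2n + m - 4 - 2t)) for j ≥ 1. Then H is harmonic (ΔH = 0) and there exists a polynomial Q with P - H = r²·Q. -/

import Mathlib

open MvPolynomial Finset

noncomputable section

/-- The Laplacian `ΔP = ∑ ∂_i² P`. -/
def lap (m : ℕ) (P : MvPolynomial (Fin m) ℂ) : MvPolynomial (Fin m) ℂ :=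
  ∑ i, pderiv i (pderiv i P)

/-- The Euler operator `E P = ∑ X_i ∂_i P`. -/
def eulerOp (m : ℕ) (P : MvPolynomial (Fin m) ℂ) : MvPolynomial (Fin m) ℂ :=
  ∑ i, X i * pderiv i P

/-- The polynomial `r² = ∑ X_i²`. -/
def r2 (m : ℕ) : MvPolynomial (Fin m) ℂ := ∑ i, X i ^ 2

/-- The Fischer inner product `⟨P,Q⟩ = ∑_α (∏_i α_i!)·conj(coeff_α P)·coeff_α Q`. -/
def fischer (m : ℕ) (P Q : MvPolynomial (Fin m) ℂ) : ℂ :=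
  ∑ α ∈ P.support, (∏ i, ((α i).factorial : ℂ)) * (starRingEnd ℂ) (coeff α P) * coeff α Q

/-! ### Auxiliary lemmas -/

lemma lap_smul (m : ℕ) (a : ℂ) (P : MvPolynomial (Fin m) ℂ) : lap m (a • P) = a • lap m P := by
  simp [lap, Finset.smul_sum]

lemma lap_sum (m : ℕ) {ι : Type*} (s : Finset ι) (f : ι → MvPolynomial (Fin m) ℂ) :
    lap m (∑ j ∈ s, f j) = ∑ j ∈ s, lap m (f j) := by
  simp only [lap, map_sum]
  exact Finset.sum_comm

lemma eulerOp_sum (m : ℕ) {ι : Type*} (s : Finset ι) (f : ι → MvPolynomial (Fin m) ℂ) :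
    eulerOp m (∑ j ∈ s, f j) = ∑ j ∈ s, eulerOp m (f j) := by
  simp only [eulerOp, map_sum, Finset.mul_sum]
  exact Finset.sum_comm

lemma degree_single_one (m : ℕ) (i : Fin m) : (Finsupp.single i 1 : Fin m →₀ ℕ).degree = 1 := by
  exact Finsupp.degree_single i 1

lemma sub_add_single {m : ℕ} (α : Fin m →₀ ℕ) (i : Fin m) (h : α i ≠ 0) :
    (α - Finsupp.single i 1) + Finsupp.single i 1 = α := by
  ext j
  rcases eq_or_ne j i with rfl | hj
  · simp [Finsupp.sub_apply]; omega
  · simp [Finsupp.sub_apply, Finsupp.single_apply, Ne.symm hj]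

lemma degree_sub_single {m : ℕ} (α : Fin m →₀ ℕ) (i : Fin m) (h : α i ≠ 0) :
    (α - Finsupp.single i 1).degree + 1 = α.degree := by
  calc (α - Finsupp.single i 1).degree + 1
      = (α - Finsupp.single i 1).degree + (Finsupp.single i 1).degree := by
        rw [degree_single_one]
    _ = α.degree := by
        rw [Finsupp.degree_eq_weight_one] at *
        rw [← map_add, sub_add_single α i h]

lemma isHom_pderiv {m n : ℕ} {P : MvPolynomial (Fin m) ℂ} (i : Fin m)
    (h : P.IsHomogeneous (n + 1)) : (pderiv i P).IsHomogeneous n := by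
  conv_lhs => rw [P.as_sum]
  rw [map_sum]
  apply IsHomogeneous.sum
  intro α hα
  rw [pderiv_monomial]
  by_cases hi : α i = 0
  · rw [hi]
    simp only [mul_zero, Nat.cast_zero]
    rw [monomial_zero]
    exact isHomogeneous_zero _ _ _
  · apply isHomogeneous_monomial
    have hd : α.degree = n + 1 := by
      have := h (mem_support_iff.mp hα)
      simpa [Finsupp.degree_eq_weight_one, Pi.one_def] using this
    have := degree_sub_single α i hi
    omega

lemma euler_monomial (m : ℕ) (α : Fin m →₀ ℕ) (a : ℂ) :
    eulerOp m (monomial α a) = (α.degree : ℂ) • monomial α a := by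
  unfold eulerOp
  have key : ∀ i : Fin m, X i * pderiv i (monomial α a) = ((α i : ℂ)) • monomial α a := by
    intro i
    rw [pderiv_monomial]
    by_cases hi : α i = 0
    · simp [hi]
    · rw [X, monomial_mul, one_mul, add_comm, sub_add_single α i hi, smul_monomial]
      congr 1
      simp [mul_comm]
  rw [Finset.sum_congr rfl (fun i _ => key i)]
  rw [← Finset.sum_smul, ← Nat.cast_sum]
  congr 1
  rw [Finsupp.degree]
  norm_cast
  exact (Finset.sum_subset (Finset.subset_univ _) (by intro x _ hx; simpa using hx)).symm

lemma euler_hom {m d : ℕ} {P : MvPolynomial (Fin m) ℂ} (h : P.IsHomogeneous d) :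
    eulerOp m P = (d : ℂ) • P := by
  conv_lhs => rw [P.as_sum]
  rw [eulerOp_sum]
  conv_rhs => rw [P.as_sum]
  rw [Finset.smul_sum]
  apply Finset.sum_congr rfl
  intro α hα
  rw [euler_monomial]
  congr 2
  have := h (mem_support_iff.mp hα)
  simpa [Finsupp.degree_eq_weight_one, Pi.one_def] using this

lemma pderiv_r2 (m : ℕ) (i : Fin m) : pderiv i (r2 m) = 2 * X i := by
  rw [r2, map_sum, Finset.sum_eq_single i]
  · simp [pow_two, pderiv_mul]; ring
  · intro b _ hb; simp [pow_two, pderiv_mul, pderiv_X_of_ne hb]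
  · simp

lemma lap_r2_mul (m : ℕ) (S : MvPolynomial (Fin m) ℂ) :
    lap m (r2 m * S) = r2 m * lap m S + (4 : ℂ) • eulerOp m S + ((2 * m : ℕ) : ℂ) • S := by
  unfold lap eulerOp
  have key : ∀ i : Fin m, pderiv i (pderiv i (r2 m * S)) =
      (2 : ℂ) • S + (4 : ℂ) • (X i * pderiv i S) + r2 m * pderiv i (pderiv i S) := by
    intro i
    have h1 : pderiv i (r2 m * S) = 2 * X i * S + r2 m * pderiv i S := by
      rw [pderiv_mul, pderiv_r2]
    have h2 : (pderiv i) (2 : MvPolynomial (Fin m) ℂ) = 0 := by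
      have e : (2 : MvPolynomial (Fin m) ℂ) = C (2 : ℂ) := by
        rw [map_ofNat]
      rw [e, pderiv_C]
    rw [h1, map_add, pderiv_mul, pderiv_mul, pderiv_mul, pderiv_r2, pderiv_X_self, h2]
    rw [smul_eq_C_mul, smul_eq_C_mul, map_ofNat, map_ofNat]
    ring
  rw [Finset.sum_congr rfl (fun i _ => key i), Finset.sum_add_distrib, Finset.sum_add_distrib]
  simp only [← Finset.smul_sum, ← Finset.mul_sum, Finset.sum_const, Finset.card_univ,
    Fintype.card_fin]
  have e2 : (2:ℂ) • (m • S) = ((2*m:ℕ):ℂ) • S := by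
    rw [← Nat.cast_smul_eq_nsmul ℂ m, smul_smul]
    congr 1
    push_cast
    ring
  rw [e2]
  abel

lemma r2_hom (m : ℕ) : (r2 m).IsHomogeneous 2 := by
  apply IsHomogeneous.sum
  intro i _
  simpa using (isHomogeneous_X ℂ i).pow 2

lemma lap_hom {m n : ℕ} {P : MvPolynomial (Fin m) ℂ} (h : P.IsHomogeneous (n + 2)) :
    (lap m P).IsHomogeneous n := by
  apply IsHomogeneous.sum
  intro i _
  exact isHom_pderiv i (isHom_pderiv i h)

lemma pderiv_hom_zero {m : ℕ} {P : MvPolynomial (Fin m) ℂ} (h : P.IsHomogeneous 0) (i : Fin m) :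
    pderiv i P = 0 := by
  conv_lhs => rw [P.as_sum]
  rw [map_sum]
  apply Finset.sum_eq_zero
  intro α hα
  have hd : α.degree = 0 := by
    have := h (mem_support_iff.mp hα)
    simpa [Finsupp.degree_eq_weight_one, Pi.one_def] using this
  have hz : α i = 0 := by
    have := Finsupp.le_degree i α
    omega
  rw [pderiv_monomial, hz]
  simp

lemma lap_hom_le_one {m d : ℕ} {P : MvPolynomial (Fin m) ℂ} (h : P.IsHomogeneous d)
    (hd : d ≤ 1) : lap m P = 0 := by
  unfold lap
  apply Finset.sum_eq_zero
  intro i _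
  interval_cases d
  · rw [pderiv_hom_zero h i]
    simp
  · exact pderiv_hom_zero (isHom_pderiv i h) i

lemma lap_r2_pow {m d : ℕ} (j : ℕ) {S : MvPolynomial (Fin m) ℂ} (hS : S.IsHomogeneous d) :
    lap m (r2 m ^ (j + 1) * S) = r2 m ^ (j + 1) * lap m S +
      ((2 * (j + 1) * (2 * d + m + 2 * j) : ℕ) : ℂ) • (r2 m ^ j * S) := by
  induction j with
  | zero =>
    rw [pow_one, pow_zero, one_mul, lap_r2_mul, euler_hom hS]
    rw [add_assoc, add_assoc]
    congr 1
    rw [smul_smul, ← add_smul]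
    congr 1
    push_cast
    ring
  | succ j ih =>
    have hpow : r2 m ^ (j + 2) * S = r2 m * (r2 m ^ (j + 1) * S) := by ring
    have hhom : (r2 m ^ (j + 1) * S).IsHomogeneous (2 * (j + 1) + d) := by
      have := ((r2_hom m).pow (j + 1)).mul hS
      exact this
    rw [hpow, lap_r2_mul, euler_hom hhom, ih]
    rw [mul_add, mul_smul_comm]
    have e1 : r2 m * (r2 m ^ (j + 1) * lap m S) = r2 m ^ (j + 2) * lap m S := by ring
    have e2 : r2 m * (r2 m ^ j * S) = r2 m ^ (j + 1) * S := by ring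
    rw [e1, e2, add_assoc, add_assoc]
    congr 1
    rw [smul_smul, ← add_smul, ← add_smul]
    congr 1
    push_cast
    ring

theorem stmt3 (m n : ℕ) (hm : 2 ≤ m) (P : MvPolynomial (Fin m) ℂ)
    (hP : P.IsHomogeneous n)
    (c : ℕ → ℂ)
    (hc0 : c 0 = 1)
    (hc : ∀ j, 1 ≤ j → c j = (-1) ^ j /
      (2 ^ j * (Nat.factorial j : ℂ) * ∏ t ∈ range j, (2 * (n : ℂ) + (m : ℂ) - 4 - 2 * (t : ℂ))))
    (H : MvPolynomial (Fin m) ℂ)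
    (hH : H = ∑ j ∈ range (n / 2 + 1), c j • (r2 m ^ j * (lap m)^[j] P)) :
    lap m H = 0 ∧ ∃ Q, P - H = r2 m * Q := by
  set q := n / 2 with hq
  set S : ℕ → MvPolynomial (Fin m) ℂ := fun j => (lap m)^[j] P with hSdef
  have hSsucc : ∀ j, S (j + 1) = lap m (S j) := by
    intro j
    simp only [hSdef, Function.iterate_succ_apply']
  have hShom : ∀ j, 2 * j ≤ n → (S j).IsHomogeneous (n - 2 * j) := by
    intro j
    induction j with
    | zero => intro _; simpa [hSdef] using hP
    | succ j ih =>
      intro hj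
      have h1 : 2 * j ≤ n := by omega
      have h2 : n - 2 * j = (n - 2 * (j + 1)) + 2 := by omega
      rw [hSsucc]
      exact lap_hom (by rw [← h2]; exact ih h1)
  -- the last Laplacian vanishes
  have hlast : lap m (S q) = 0 := by
    have h1 : 2 * q ≤ n := by omega
    exact lap_hom_le_one (hShom q h1) (by omega)
  -- the telescoping coefficient identity
  set w : ℕ → ℂ := fun t => 2 * (n : ℂ) + (m : ℂ) - 4 - 2 * (t : ℂ) with hw
  have hcf : ∀ k, c k = (-1) ^ k / (2 ^ k * (Nat.factorial k : ℂ) * ∏ t ∈ range k, w t) := by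
    intro k
    cases k with
    | zero => simpa using hc0
    | succ k => exact hc (k + 1) (by omega)
  have hwne : ∀ t, t + 1 ≤ q → w t ≠ 0 := by
    intro t ht
    have h1 : 4 + 2 * t < 2 * n + m := by omega
    have h2 : w t = (((2 * n + m) - (4 + 2 * t) : ℕ) : ℂ) := by
      rw [Nat.cast_sub h1.le]
      push_cast [hw]
      ring
    have h3 : ((2 * n + m) - (4 + 2 * t) : ℕ) ≠ 0 := by omega
    rw [h2]
    exact_mod_cast h3
  have hkey : ∀ j, j < q →
      c (j + 1) * ((2 * (j + 1) * (2 * (n - 2 * (j + 1)) + m + 2 * j) : ℕ) : ℂ) = - c j := by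
    intro j hj
    have hle : 2 * (j + 1) ≤ n := by omega
    have hcastK : ((2 * (j + 1) * (2 * (n - 2 * (j + 1)) + m + 2 * j) : ℕ) : ℂ)
        = 2 * ((j : ℂ) + 1) * w j := by
      push_cast [Nat.cast_sub hle, hw]
      ring
    rw [hcastK, hcf (j + 1), hcf j, Finset.prod_range_succ]
    have hwj : w j ≠ 0 := hwne j (by omega)
    have hprod : (∏ t ∈ range j, w t) ≠ 0 := by
      apply Finset.prod_ne_zero_iff.mpr
      intro t ht
      exact hwne t (by simp at ht; omega)
    have hfac : ((Nat.factorial j : ℂ)) ≠ 0 := by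
      exact_mod_cast Nat.factorial_ne_zero j
    have hfacs : ((Nat.factorial (j + 1) : ℂ)) = ((j : ℂ) + 1) * (Nat.factorial j : ℂ) := by
      rw [Nat.factorial_succ]
      push_cast
      ring
    have hj1 : ((j : ℂ) + 1) ≠ 0 := Nat.cast_add_one_ne_zero j
    rw [hfacs]
    have h2 : (2 : ℂ) ≠ 0 := two_ne_zero
    field_simp
    ring
  -- define A j = r2^j * S (j+1)
  set A : ℕ → MvPolynomial (Fin m) ℂ := fun j => r2 m ^ j * S (j + 1) with hA
  have hAq : A q = 0 := by
    rw [hA]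
    simp only [hSsucc, hlast, mul_zero]
  constructor
  · -- harmonicity
    have step1 : lap m H = ∑ j ∈ range (q + 1), c j • lap m (r2 m ^ j * S j) := by
      rw [hH, lap_sum]
      exact Finset.sum_congr rfl fun j _ => lap_smul m (c j) _
    rw [step1, Finset.sum_range_succ']
    have hterm : ∀ j ∈ range q, c (j + 1) • lap m (r2 m ^ (j + 1) * S (j + 1)) =
        c (j + 1) • A (j + 1) + (- c j) • A j := by
      intro j hj
      rw [Finset.mem_range] at hj
      have hle : 2 * (j + 1) ≤ n := by omega
      rw [lap_r2_pow j (hShom (j + 1) hle), smul_add, smul_smul, hkey j hj]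
      congr 1
      · rw [hA]
        simp only [hSsucc]
    rw [Finset.sum_congr rfl hterm, Finset.sum_add_distrib]
    have h0 : c 0 • lap m (r2 m ^ 0 * S 0) = c 0 • A 0 := by
      rw [hA]
      simp [hSsucc, hSdef]
    rw [h0]
    have hshift : ∑ j ∈ range q, c (j + 1) • A (j + 1) =
        ∑ j ∈ range (q + 1), c j • A j - c 0 • A 0 := by
      rw [Finset.sum_range_succ']
      ring
    rw [hshift, Finset.sum_range_succ, hAq]
    simp only [smul_zero, add_zero, neg_smul]
    rw [Finset.sum_neg_distrib]
    abel
  · -- divisibility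
    refine ⟨- ∑ j ∈ range q, c (j + 1) • (r2 m ^ j * S (j + 1)), ?_⟩
    have hS' : ∀ j, (lap m)^[j] P = S j := fun _ => rfl
    rw [hH, Finset.sum_range_succ']
    have h0 : c 0 • (r2 m ^ 0 * S 0) = P := by
      simp [hc0, hSdef]
    simp only [hS']
    rw [h0, mul_neg, Finset.mul_sum]
    have hterm : ∀ j ∈ range q, r2 m * (c (j + 1) • (r2 m ^ j * S (j + 1))) =
        c (j + 1) • (r2 m ^ (j + 1) * S (j + 1)) := by
      intro j _
      rw [mul_smul_comm]
      congr 1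
      ring
    rw [Finset.sum_congr rfl hterm]
    abel

end
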